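/- The odd Yellowstone variant is a permutation of the odd positive integers: with Ω the set of odd positive integers, the sequence starting 1, 3, 5 and extended greedily within Ω (smallest unused element of Ω sharing a factor with the term two back and coprime to the previous term) is a bijection onto Ω. -/

import Mathlib

/-- The odd Yellowstone variant: c 1 = 1, c 2 = 3, c 3 = 5, and for n ≥ 4,
c n is the least odd positive integer not among c 1, …, c (n-1) which
shares a common factor with c (n-2) and is coprime to c (n-1). -/
def IsOddYellowstone (c : ℕ → ℕ) : Prop :=
  c 1 = 1 ∧ c 2 = 3 ∧ c 3 = 5 ∧
  ∀ n, 4 ≤ n →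
    IsLeast {k : ℕ | 0 < k ∧ Odd k ∧ (∀ m, 1 ≤ m → m < n → c m ≠ k) ∧
      1 < Nat.gcd k (c (n - 2)) ∧ Nat.gcd k (c (n - 1)) = 1} (c n)

namespace OYAux

variable {c : ℕ → ℕ}

/-- The membership part of the defining property, reindexed. -/
lemma oy_spec (hc : IsOddYellowstone c) {m : ℕ} (hm : 2 ≤ m) :
    0 < c (m + 2) ∧ Odd (c (m + 2)) ∧
      (∀ j, 1 ≤ j → j < m + 2 → c j ≠ c (m + 2)) ∧
      1 < Nat.gcd (c (m + 2)) (c m) ∧ Nat.gcd (c (m + 2)) (c (m + 1)) = 1 := by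
  have h := (hc.2.2.2 (m + 2) (by omega)).1
  simpa using h

/-- The minimality part of the defining property, reindexed. -/
lemma oy_min (hc : IsOddYellowstone c) {m : ℕ} (hm : 2 ≤ m) {x : ℕ}
    (h1 : 0 < x) (h2 : Odd x) (h3 : ∀ j, 1 ≤ j → j < m + 2 → c j ≠ x)
    (h4 : 1 < Nat.gcd x (c m)) (h5 : Nat.gcd x (c (m + 1)) = 1) :
    c (m + 2) ≤ x :=
  (hc.2.2.2 (m + 2) (by omega)).2 ⟨h1, h2, h3, h4, h5⟩

lemma oy_posodd (hc : IsOddYellowstone c) {n : ℕ} (hn : 1 ≤ n) :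
    0 < c n ∧ Odd (c n) := by
  rcases lt_or_ge n 4 with h | h
  · interval_cases n
    · rw [hc.1]; exact ⟨one_pos, odd_one⟩
    · rw [hc.2.1]; exact ⟨by norm_num, by decide⟩
    · rw [hc.2.2.1]; exact ⟨by norm_num, by decide⟩
  · obtain ⟨m, rfl⟩ : ∃ m, n = m + 2 := ⟨n - 2, by omega⟩
    obtain ⟨h1, h2, _⟩ := oy_spec hc (show 2 ≤ m by omega)
    exact ⟨h1, h2⟩

lemma oy_ne (hc : IsOddYellowstone c) {a b : ℕ} (ha : 1 ≤ a) (hab : a < b) :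
    c a ≠ c b := by
  rcases lt_or_ge b 4 with h | h
  · interval_cases b <;> interval_cases a <;>
      simp [hc.1, hc.2.1, hc.2.2.1]
  · obtain ⟨m, rfl⟩ : ∃ m, b = m + 2 := ⟨b - 2, by omega⟩
    exact (oy_spec hc (show 2 ≤ m by omega)).2.2.1 a ha hab

/-- Consecutive terms are coprime. -/
lemma oy_cop (hc : IsOddYellowstone c) {m : ℕ} (hm : 1 ≤ m) :
    Nat.gcd (c (m + 1)) (c m) = 1 := by
  rcases lt_or_ge m 3 with h | h
  · interval_cases m
    · rw [hc.1, hc.2.1]; decide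
    · rw [hc.2.1, hc.2.2.1]; decide
  · obtain ⟨m', rfl⟩ : ∃ m', m = m' + 2 := ⟨m - 2, by omega⟩
    have := (oy_spec hc (show 2 ≤ m' + 1 by omega)).2.2.2.2
    simpa [show m' + 1 + 2 = m' + 2 + 1 by omega, show m' + 1 + 1 = m' + 2 by omega]
      using this

lemma oy_share (hc : IsOddYellowstone c) {m : ℕ} (hm : 2 ≤ m) :
    1 < Nat.gcd (c (m + 2)) (c m) :=
  (oy_spec hc hm).2.2.2.1

/-- Only finitely many indices carry values `≤ B`; beyond some point all terms exceed `B`. -/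
lemma oy_exists_large (hc : IsOddYellowstone c) (B : ℕ) :
    ∃ N, 1 ≤ N ∧ ∀ n, N ≤ n → B < c n := by
  have hfin : {n : ℕ | 1 ≤ n ∧ c n ≤ B}.Finite := by
    apply Set.Finite.of_finite_image (f := c)
    · apply (Set.finite_Iic B).subset
      rintro _ ⟨n, ⟨_, h⟩, rfl⟩
      exact h
    · intro a ha b hb hab
      by_contra hne
      rcases Nat.lt_or_ge a b with h | h
      · exact oy_ne hc ha.1 h hab
      · exact oy_ne hc hb.1 (by omega) hab.symm
  obtain ⟨N₀, hN₀⟩ := hfin.bddAbove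
  refine ⟨N₀ + 1, by omega, fun n hn => ?_⟩
  by_contra h
  push_neg at h
  have : n ∈ {n : ℕ | 1 ≤ n ∧ c n ≤ B} := ⟨by omega, h⟩
  have := hN₀ this
  omega

/-- Infinitely many terms are divisible by 3. -/
lemma oy_three (hc : IsOddYellowstone c) :
    ∀ M, ∃ n, M ≤ n ∧ 1 ≤ n ∧ 3 ∣ c n := by
  intro M
  by_contra hcon
  push_neg at hcon
  -- hcon : ∀ n, M ≤ n → 1 ≤ n → ¬ 3 ∣ c n
  have hM3 : 3 ≤ M := by
    by_contra h
    exact hcon 2 (by omega) (by omega) (by rw [hc.2.1])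
  set B := max 3 ((Finset.range M).sup c) with hBdef
  have hB3 : 3 ≤ B := le_max_left _ _
  have hBdvd : ∀ n, 1 ≤ n → 3 ∣ c n → c n ≤ B := by
    intro n h1 h3
    have hnM : n < M := by
      by_contra h
      exact hcon n (by omega) h1 h3
    exact le_trans (Finset.le_sup (Finset.mem_range.mpr hnM)) (le_max_right _ _)
  obtain ⟨N₄, hN₄1, hN₄⟩ := oy_exists_large hc (B ^ 3)
  set N₅ := max N₄ M with hN₅def
  have descent : ∀ m, N₅ ≤ m → c (m + 2) < c m := by
    intro m hm
    have hmM : M ≤ m := le_trans (le_max_right _ _) hm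
    have hm2 : 2 ≤ m := by omega
    have hcm_large : B ^ 3 < c m := hN₄ m (le_trans (le_max_left _ _) hm)
    have hcm2_large : B ^ 3 < c (m + 2) := hN₄ (m + 2) (by omega)
    have hB27 : 27 ≤ B ^ 3 := by calc (27:ℕ) = 3^3 := by norm_num
      _ ≤ B^3 := Nat.pow_le_pow_left hB3 3
    have hcmpos : 0 < c m := (oy_posodd hc (by omega)).1
    have hcm1 : c m ≠ 1 := by intro h1; rw [h1] at hcm_large; linarith
    set p := Nat.minFac (c m) with hpdef
    have hp : p.Prime := Nat.minFac_prime hcm1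
    have hpd : p ∣ c m := Nat.minFac_dvd _
    have hoddm : Odd (c m) := (oy_posodd hc (by omega)).2
    have hpodd : Odd p := by
      refine hp.odd_of_ne_two (fun h2 => ?_)
      have : 2 ∣ c m := h2 ▸ hpd
      have := Nat.odd_iff.mp hoddm
      omega
    have hp3 : p ≠ 3 := by
      intro h3
      have : 3 ∣ c m := h3 ▸ hpd
      exact hcon m (by omega) (by omega) this
    have hpndvd1 : ¬ p ∣ c (m + 1) := by
      intro hd
      have : p ∣ Nat.gcd (c (m + 1)) (c m) := Nat.dvd_gcd hd hpd
      rw [oy_cop hc (show 1 ≤ m by omega)] at this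
      exact hp.one_lt.ne' (Nat.dvd_one.mp this)
    have h3ndvd1 : ¬ 3 ∣ c (m + 1) := hcon (m + 1) (by omega) (by omega)
    have hcand : ∀ e, 1 ≤ e → B < 3 * p ^ e → c (m + 2) ≤ 3 * p ^ e := by
      intro e he hgt
      apply oy_min hc hm2
      · exact Nat.mul_pos (by norm_num) (pow_pos hp.pos e)
      · rw [Nat.odd_mul]
        exact ⟨by decide, hpodd.pow⟩
      · intro j hj1 hj2 hEq
        have h3x : 3 ∣ c j := hEq ▸ Dvd.intro _ rfl
        have hCB := hBdvd j hj1 h3x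
        rw [hEq] at hCB
        exact absurd hCB (not_le.mpr hgt)
      · have hpg : p ∣ Nat.gcd (3 * p ^ e) (c m) :=
          Nat.dvd_gcd (Dvd.dvd.mul_left (dvd_pow_self p (by omega)) 3) hpd
        have hgpos : 0 < Nat.gcd (3 * p ^ e) (c m) :=
          Nat.gcd_pos_of_pos_left _ (Nat.mul_pos (by norm_num) (pow_pos hp.pos e))
        have := Nat.le_of_dvd hgpos hpg
        have := hp.two_le
        omega
      · have c3 : Nat.Coprime 3 (c (m + 1)) :=
          (Nat.Prime.coprime_iff_not_dvd (by norm_num)).mpr h3ndvd1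
        have cp : Nat.Coprime p (c (m + 1)) :=
          (hp.coprime_iff_not_dvd).mpr hpndvd1
        exact Nat.Coprime.mul c3 (cp.pow_left e)
    have hex : ∃ e, B < 3 * p ^ e := by
      refine ⟨B, ?_⟩
      calc B < p ^ B := Nat.lt_pow_self hp.one_lt
        _ ≤ 3 * p ^ B := Nat.le_mul_of_pos_left _ (by norm_num)
    have he : B < 3 * p ^ Nat.find hex := Nat.find_spec hex
    set e := Nat.find hex with hedef
    have he1 : 1 ≤ e := by
      rcases Nat.eq_zero_or_pos e with h0 | h0
      · rw [h0] at he; simp at he; omega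
      · omega
    have hle := hcand e he1 he
    have hminfind : ¬ B < 3 * p ^ (e - 1) := Nat.find_min hex (by omega)
    push_neg at hminfind
    have hpB : B ^ 2 < p := by
      have heq : 3 * p ^ e = 3 * p ^ (e - 1) * p := by
        rw [mul_assoc, ← pow_succ]
        congr 2
        omega
      have h1 : c (m + 2) ≤ 3 * p ^ (e - 1) * p := heq ▸ hle
      have h2 : 3 * p ^ (e - 1) * p ≤ B * p := Nat.mul_le_mul hminfind le_rfl
      by_contra hcon3
      push_neg at hcon3
      have h3 : B * p ≤ B * B ^ 2 := Nat.mul_le_mul le_rfl hcon3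
      have h4 : B * B ^ 2 = B ^ 3 := by ring
      linarith
    have hle3p : c (m + 2) ≤ 3 * p := by
      have h := hcand 1 le_rfl (by
        have hBB : B ≤ B ^ 2 := by nlinarith
        have : p ≤ 3 * p ^ 1 := by rw [pow_one]; omega
        linarith)
      simpa using h
    have hnp : ¬ (c m).Prime := by
      intro hpr
      have hge := oy_share hc hm2
      have hdv : c m ∣ c (m + 2) := by
        rcases (Nat.Prime.eq_one_or_self_of_dvd hpr _ (Nat.gcd_dvd_right (c (m + 2)) (c m)))
          with h1 | h2
        · omega
        · rw [← h2]; exact Nat.gcd_dvd_left _ _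
      obtain ⟨t, ht⟩ := hdv
      have hpe : p = c m := by
        rw [hpdef]
        exact Nat.Prime.minFac_eq hpr
      have hple : c (m + 2) ≤ 3 * c m := by rw [hpe] at hle3p; exact hle3p
      have ht3 : t ≤ 3 := by
        by_contra hcon4
        push_neg at hcon4
        have : c m * 4 ≤ c m * t := Nat.mul_le_mul le_rfl hcon4
        omega
      have hoddm2 : Odd (c (m + 2)) := (oy_posodd hc (by omega)).2
      have hBlt : B < B ^ 3 := by nlinarith [hB3]
      interval_cases t
      · omega
      · have hEq2 : c m = c (m + 2) := by omega
        exact oy_ne hc (show 1 ≤ m by omega) (show m < m + 2 by omega) hEq2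
      · have := Nat.odd_iff.mp hoddm2
        omega
      · have h3d : 3 ∣ c (m + 2) := ⟨c m, by omega⟩
        have hle' := hBdvd (m + 2) (by omega) h3d
        linarith
    have hsq : p ^ 2 ≤ c m := Nat.minFac_sq_le_self hcmpos hnp
    -- show 3 * p < c m, hence c (m+2) ≤ 3p < c m
    have h9 : 9 < c m := by linarith
    have h3p : 3 * p < c m := by
      by_contra hcon3
      push_neg at hcon3
      have h1 : c m * c m ≤ (3 * p) * (3 * p) := Nat.mul_le_mul hcon3 hcon3
      have h2 : (3 * p) * (3 * p) = 9 * p ^ 2 := by ring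
      have h3 : 9 * p ^ 2 ≤ 9 * c m := by linarith
      have h4 : c m * c m ≤ 9 * c m := by linarith
      have h5 : c m ≤ 9 := Nat.le_of_mul_le_mul_right h4 hcmpos
      omega
    omega
  -- infinite descent
  have key : ∀ j, c (N₅ + 2 * j) + j ≤ c N₅ := by
    intro j
    induction j with
    | zero => simp
    | succ j ih =>
      have hlt : c (N₅ + 2 * j + 2) < c (N₅ + 2 * j) := descent _ (by omega)
      have heq : N₅ + 2 * (j + 1) = N₅ + 2 * j + 2 := by ring
      rw [heq]
      omega
  have := key (c N₅ + 1)
  omega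

/-- Every odd prime divides infinitely many terms. -/
lemma oy_prime_dvd (hc : IsOddYellowstone c) {q : ℕ} (hq : q.Prime) (hqo : Odd q) :
    ∀ M, ∃ n, M ≤ n ∧ 1 ≤ n ∧ q ∣ c n := by
  intro M
  by_contra hcon
  push_neg at hcon
  set B := (Finset.range M).sup c with hBdef
  have hBd : ∀ n, 1 ≤ n → q ∣ c n → c n ≤ B := by
    intro n h1 hd
    have : n < M := by
      by_contra h
      exact hcon n (by omega) h1 hd
    exact Finset.le_sup (Finset.mem_range.mpr this)
  set x := 3 ^ (B + 1) * q with hxdef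
  have hxB : B < x := by
    have h1 : B < 3 ^ B := Nat.lt_pow_self (by norm_num)
    have h2 : 3 ^ B ≤ 3 ^ (B + 1) := Nat.pow_le_pow_right (by norm_num) (by omega)
    have h3 : 3 ^ (B + 1) ≤ 3 ^ (B + 1) * q := Nat.le_mul_of_pos_right _ hq.pos
    rw [hxdef]
    linarith
  obtain ⟨N, hN1, hN⟩ := oy_exists_large hc x
  obtain ⟨m, hm1, hm2, hm3⟩ := oy_three hc (max (max M 2) N)
  have hmm : 2 ≤ m := le_trans (le_trans (le_max_right M 2) (le_max_left _ N)) hm1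
  have hmM : M ≤ m := le_trans (le_trans (le_max_left M 2) (le_max_left _ N)) hm1
  have hmN : N ≤ m := le_trans (le_max_right _ N) hm1
  have h3ndvd1 : ¬ 3 ∣ c (m + 1) := by
    intro hd
    have : 3 ∣ Nat.gcd (c (m + 1)) (c m) := Nat.dvd_gcd hd hm3
    rw [oy_cop hc (show 1 ≤ m by omega)] at this
    omega
  have hqndvd1 : ¬ q ∣ c (m + 1) := hcon (m + 1) (by omega) (by omega)
  have hxpos : 0 < x := Nat.mul_pos (pow_pos (by norm_num) _) hq.pos
  have hle : c (m + 2) ≤ x := by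
    apply oy_min hc hmm
    · exact hxpos
    · rw [Nat.odd_mul]
      exact ⟨Odd.pow (by decide), hqo⟩
    · intro j hj1 hj2 hEq
      have hqd : q ∣ c j := hEq ▸ Dvd.intro_left _ rfl
      have hCB := hBd j hj1 hqd
      rw [hEq] at hCB
      exact absurd hCB (not_le.mpr hxB)
    · have h3x : 3 ∣ x := Dvd.dvd.mul_right (dvd_pow_self 3 (by omega)) q
      have h3g : 3 ∣ Nat.gcd x (c m) := Nat.dvd_gcd h3x hm3
      have hgpos : 0 < Nat.gcd x (c m) := Nat.gcd_pos_of_pos_left _ hxpos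
      have := Nat.le_of_dvd hgpos h3g
      omega
    · have c3 : Nat.Coprime 3 (c (m + 1)) :=
        (Nat.Prime.coprime_iff_not_dvd (by norm_num)).mpr h3ndvd1
      have cq : Nat.Coprime q (c (m + 1)) :=
        (hq.coprime_iff_not_dvd).mpr hqndvd1
      exact Nat.Coprime.mul (c3.pow_left (B + 1)) cq
  have := hN (m + 2) (by omega)
  exact absurd this (not_lt.mpr hle)

/-- For every odd prime q, prime powers of q occur as terms with arbitrarily large index. -/
lemma oy_pow_exists (hc : IsOddYellowstone c) {q : ℕ} (hq : q.Prime) (hqo : Odd q) :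
    ∀ M, ∃ n e, M ≤ n ∧ 1 ≤ n ∧ 1 ≤ e ∧ c n = q ^ e := by
  intro M
  by_contra hcon
  push_neg at hcon
  -- hcon : ∀ n e, M ≤ n → 1 ≤ n → 1 ≤ e → c n ≠ q ^ e
  set B := (Finset.range M).sup c with hBdef
  set x := q ^ (B + 1) with hxdef
  have hxB : B < x := by
    have h1 : B < q ^ B := Nat.lt_pow_self hq.one_lt
    have h2 : q ^ B ≤ q ^ (B + 1) := Nat.pow_le_pow_right hq.pos (by omega)
    rw [hxdef]
    linarith
  have hunused : ∀ j, 1 ≤ j → c j ≠ x := by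
    intro j hj hEq
    by_cases hjM : j < M
    · have : c j ≤ B := Finset.le_sup (Finset.mem_range.mpr hjM)
      omega
    · exact hcon j (B + 1) (by omega) hj (by omega) hEq
  obtain ⟨N, hN1, hN⟩ := oy_exists_large hc x
  obtain ⟨m, hm1, hm2, hmq⟩ := oy_prime_dvd hc hq hqo (max (max M 2) N)
  have hmm : 2 ≤ m := le_trans (le_trans (le_max_right M 2) (le_max_left _ N)) hm1
  have hmN : N ≤ m := le_trans (le_max_right _ N) hm1
  have hqndvd1 : ¬ q ∣ c (m + 1) := by
    intro hd
    have : q ∣ Nat.gcd (c (m + 1)) (c m) := Nat.dvd_gcd hd hmq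
    rw [oy_cop hc (show 1 ≤ m by omega)] at this
    have h1 := Nat.le_of_dvd one_pos this
    have h2 := hq.two_le
    omega
  have hxpos : 0 < x := pow_pos hq.pos _
  have hle : c (m + 2) ≤ x := by
    apply oy_min hc hmm
    · exact hxpos
    · exact hqo.pow
    · intro j hj1 hj2 hEq
      exact hunused j hj1 hEq
    · have hqg : q ∣ Nat.gcd x (c m) := Nat.dvd_gcd (dvd_pow_self q (by omega)) hmq
      have hgpos : 0 < Nat.gcd x (c m) := Nat.gcd_pos_of_pos_left _ hxpos
      have := Nat.le_of_dvd hgpos hqg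
      have := hq.two_le
      omega
    · have cq : Nat.Coprime q (c (m + 1)) := (hq.coprime_iff_not_dvd).mpr hqndvd1
      exact cq.pow_left (B + 1)
  have := hN (m + 2) (by omega)
  exact absurd this (not_lt.mpr hle)

/-- Every odd positive integer occurs. -/
lemma oy_surj (hc : IsOddYellowstone c) :
    ∀ k, 0 < k → Odd k → ∃ n, 1 ≤ n ∧ c n = k := by
  by_contra hcon
  push_neg at hcon
  obtain ⟨k₀, hk₀p, hk₀o, hk₀⟩ := hcon
  classical
  have hex : ∃ k, 0 < k ∧ Odd k ∧ ∀ n, 1 ≤ n → c n ≠ k := ⟨k₀, hk₀p, hk₀o, hk₀⟩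
  obtain ⟨hkp, hko, hknot⟩ := Nat.find_spec hex
  set k := Nat.find hex with hkdef
  have hsmall : ∀ j, 0 < j → Odd j → j < k → ∃ n, 1 ≤ n ∧ c n = j := by
    intro j h1 h2 h3
    by_contra hj
    push_neg at hj
    exact Nat.find_min hex h3 ⟨h1, h2, fun n hn => hj n hn⟩
  have hk1 : k ≠ 1 := by
    intro h'
    exact hknot 1 le_rfl (by rw [hc.1, h'])
  have hk3 : 3 ≤ k := by
    have := Nat.odd_iff.mp hko
    omega
  obtain ⟨N, hN⟩ : ∃ N, ∀ j, 0 < j → Odd j → j < k → ∃ n, 1 ≤ n ∧ n ≤ N ∧ c n = j := by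
    choose! f hf1 hf2 using hsmall
    refine ⟨(Finset.range k).sup f, fun j h1 h2 h3 => ?_⟩
    exact ⟨f j, hf1 j h1 h2 h3, Finset.le_sup (Finset.mem_range.mpr h3), hf2 j h1 h2 h3⟩
  have hbig : ∀ n, N < n → k < c n := by
    intro n hn
    have h1n : 1 ≤ n := by omega
    obtain ⟨hpos, hodd⟩ := oy_posodd hc h1n
    rcases Nat.lt_trichotomy (c n) k with hlt | heq | hgt
    · obtain ⟨n', hn'1, hn'2, hn'3⟩ := hN (c n) hpos hodd hlt
      exact absurd hn'3 (oy_ne hc hn'1 (by omega))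
    · exact absurd heq (hknot n h1n)
    · exact hgt
  set p := Nat.minFac k with hpdef
  have hpp : p.Prime := Nat.minFac_prime hk1
  have hpk : p ∣ k := Nat.minFac_dvd k
  have hpo : Odd p := by
    refine hpp.odd_of_ne_two (fun h2 => ?_)
    have : 2 ∣ k := h2 ▸ hpk
    have := Nat.odd_iff.mp hko
    omega
  obtain ⟨m₁, hm₁a, hm₁b, hm₁c⟩ := oy_prime_dvd hc hpp hpo (max (N + 1) 2)
  have hm₁N : N + 1 ≤ m₁ := le_trans (le_max_left _ _) hm₁a
  have hm₁2 : 2 ≤ m₁ := le_trans (le_max_right _ _) hm₁a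
  have hall : ∀ j, 1 < Nat.gcd k (c (m₁ + j)) := by
    intro j
    induction j with
    | zero =>
      have hpg : p ∣ Nat.gcd k (c m₁) := Nat.dvd_gcd hpk hm₁c
      have hgpos : 0 < Nat.gcd k (c m₁) := Nat.gcd_pos_of_pos_left _ hkp
      have := Nat.le_of_dvd hgpos hpg
      have := hpp.two_le
      simp only [Nat.add_zero]
      omega
    | succ j ih =>
      rw [show m₁ + (j + 1) = m₁ + j + 1 by omega]
      by_contra hcon2
      have hg1 : Nat.gcd k (c (m₁ + j + 1)) = 1 := by
        have : 0 < Nat.gcd k (c (m₁ + j + 1)) := Nat.gcd_pos_of_pos_left _ hkp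
        omega
      have hle := oy_min hc (show 2 ≤ m₁ + j by omega) hkp hko
        (fun i hi1 _ => hknot i hi1) ih hg1
      have := hbig (m₁ + j + 2) (by omega)
      omega
  obtain ⟨q, hq1, hq2⟩ := Nat.exists_infinite_primes (k + 2)
  have hqo : Odd q := hq2.odd_of_ne_two (by omega)
  have hqk : ¬ q ∣ k := fun hd => absurd (Nat.le_of_dvd hkp hd) (by omega)
  obtain ⟨n, e, hn1, hn2, he1, hnq⟩ := oy_pow_exists hc hq2 hqo m₁
  have hgc := hall (n - m₁)
  rw [show m₁ + (n - m₁) = n by omega, hnq] at hgc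
  have hcop : Nat.Coprime k (q ^ e) :=
    Nat.Coprime.pow_right e (Nat.coprime_comm.mp ((hq2.coprime_iff_not_dvd).mpr hqk))
  rw [Nat.Coprime] at hcop
  omega

end OYAux

theorem odd_yellowstone_is_permutation (c : ℕ → ℕ) (hc : IsOddYellowstone c) :
    Set.BijOn c {n : ℕ | 1 ≤ n} {k : ℕ | 0 < k ∧ Odd k} := by
  refine ⟨fun n hn => OYAux.oy_posodd hc hn, ?_, ?_⟩
  · intro a ha b hb hab
    by_contra hne
    rcases Nat.lt_or_ge a b with h | h
    · exact OYAux.oy_ne hc ha h hab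
    · exact OYAux.oy_ne hc hb (by omega) hab.symm
  · rintro k ⟨hkp, hko⟩
    obtain ⟨n, hn, hEq⟩ := OYAux.oy_surj hc k hkp hko
    exact ⟨n, hn, hEq⟩
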